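/- The function g₄(x,t) = [3a₂² − 12a₂(a₂x+a₁)² + 4(a₂x+a₁)⁴]·e^{-5a₂t} is a solution of the Fokker–Planck equation. -/

import Mathlib

noncomputable section

/-- `u : ℝ × ℝ → ℝ`, written `u (x, t)`, solves the Fokker–Planck equation
`u_t = -a₂ u - (a₂ x + a₁) u_x + (1/2) u_xx`. -/
def IsFPESol (a1 a2 : ℝ) (u : ℝ × ℝ → ℝ) : Prop :=
  ∀ x t : ℝ,
    deriv (fun s => u (x, s)) t =
      -a2 * u (x, t) - (a2 * x + a1) * deriv (fun y => u (y, t)) x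
        + (1 / 2) * deriv (deriv fun y => u (y, t)) x

theorem stmt_8 (a1 a2 : ℝ) (ha2 : a2 ≠ 0) :
    IsFPESol a1 a2 (fun p : ℝ × ℝ =>
      (3 * a2 ^ 2 - 12 * a2 * (a2 * p.1 + a1) ^ 2 + 4 * (a2 * p.1 + a1) ^ 4) *
        Real.exp (-5 * a2 * p.2)) := by
  intro x t
  have hL : ∀ y : ℝ, HasDerivAt (fun y : ℝ => a2 * y + a1) a2 y := fun y => by
    simpa using ((hasDerivAt_id y).const_mul a2).add_const a1
  -- first spatial derivative of the polynomial part
  have hP : ∀ y : ℝ, HasDerivAt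
      (fun y : ℝ => 3 * a2 ^ 2 - 12 * a2 * (a2 * y + a1) ^ 2 + 4 * (a2 * y + a1) ^ 4)
      (-(12 * a2 * (2 * (a2 * y + a1) ^ 1 * a2)) + 4 * (4 * (a2 * y + a1) ^ 3 * a2)) y := by
    intro y
    have := ((hasDerivAt_const y (3 * a2 ^ 2)).sub (((hL y).pow 2).const_mul (12 * a2))).add
      (((hL y).pow 4).const_mul 4)
    refine (this.congr_deriv ?_).congr_of_eventuallyEq (Filter.Eventually.of_forall fun z => ?_)
    · push_cast
      ring
    · simp only [Pi.add_apply, Pi.sub_apply, Pi.pow_apply]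
  have hQ : ∀ y : ℝ, HasDerivAt
      (fun y : ℝ => (-(12 * a2 * (2 * (a2 * y + a1) ^ 1 * a2)) + 4 * (4 * (a2 * y + a1) ^ 3 * a2)))
      (-(12 * a2 * (2 * (1 * (a2 * y + a1) ^ 0 * a2) * a2)) + 4 * (4 * (3 * (a2 * y + a1) ^ 2 * a2) * a2)) y := by
    intro y
    have h1 : HasDerivAt (fun y : ℝ => 12 * a2 * (2 * (a2 * y + a1) ^ 1 * a2))
        (12 * a2 * (2 * (1 * (a2 * y + a1) ^ 0 * a2) * a2)) y := by
      have := (((hL y).pow 1).const_mul 2).mul_const a2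
      simpa [mul_assoc, mul_comm, mul_left_comm] using this.const_mul (12 * a2)
    have h2 : HasDerivAt (fun y : ℝ => 4 * (4 * (a2 * y + a1) ^ 3 * a2))
        (4 * (4 * (3 * (a2 * y + a1) ^ 2 * a2) * a2)) y := by
      have := (((hL y).pow 3).const_mul 4).mul_const a2
      simpa [mul_assoc, mul_comm, mul_left_comm] using this.const_mul 4
    exact h1.neg.add h2
  set c := Real.exp (-5 * a2 * t) with hc
  -- time derivative
  have ht : deriv (fun s => (3 * a2 ^ 2 - 12 * a2 * (a2 * x + a1) ^ 2 + 4 * (a2 * x + a1) ^ 4) *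
      Real.exp (-5 * a2 * s)) t =
      (3 * a2 ^ 2 - 12 * a2 * (a2 * x + a1) ^ 2 + 4 * (a2 * x + a1) ^ 4) * ((-5 * a2) * c) := by
    have he : HasDerivAt (fun s : ℝ => Real.exp (-5 * a2 * s)) ((-5 * a2) * c) t := by
      have := ((hasDerivAt_id t).const_mul (-5 * a2)).exp
      simpa [hc, mul_comm] using this
    exact (he.const_mul _).deriv
  -- first spatial derivative
  have hx1 : deriv (fun y => (3 * a2 ^ 2 - 12 * a2 * (a2 * y + a1) ^ 2 + 4 * (a2 * y + a1) ^ 4) * c) =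
      fun y => (-(12 * a2 * (2 * (a2 * y + a1) ^ 1 * a2)) + 4 * (4 * (a2 * y + a1) ^ 3 * a2)) * c := by
    funext y
    exact ((hP y).mul_const c).deriv
  have hx2 : deriv (deriv fun y =>
      (3 * a2 ^ 2 - 12 * a2 * (a2 * y + a1) ^ 2 + 4 * (a2 * y + a1) ^ 4) * c) x =
      (-(12 * a2 * (2 * (1 * (a2 * x + a1) ^ 0 * a2) * a2)) + 4 * (4 * (3 * (a2 * x + a1) ^ 2 * a2) * a2)) * c := by
    rw [hx1]
    exact ((hQ x).mul_const c).deriv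
  simp only
  rw [ht, ((hP x).mul_const c).deriv, hx2]
  ring
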